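/- Let a, b, c be positive real numbers and define F : ℝ² → ℂ by F(φ, η) = −(b/(ac))·(a + b·e^{iφ} + c·e^{iη})·e^{i(φ−η)} (the inverse uniformizer of the planar robot 3-arm A(a,b,c)). Then, identifying ℂ with ℝ², the Jacobian determinant of F at (φ, η) equals (b²/(a²c²))·(ab·sin φ + ac·sin η + bc·sin(η − φ)). In particular, (φ, η) is a critical point of F if and only if the signed area of the corresponding arm configuration is zero. -/

import Mathlib

open Complex in
private lemma surj_aux15 (L : ℝ × ℝ →L[ℝ] ℂ) :
    ¬ Function.Surjective L ↔
      (L (1, 0)).re * (L (0, 1)).im - (L (1, 0)).im * (L (0, 1)).re = 0 := by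
  set u := L (1, 0) with hu
  set v := L (0, 1) with hv
  have hL : ∀ p : ℝ × ℝ, L p = (p.1 : ℂ) * u + (p.2 : ℂ) * v := by
    intro p
    have hp : p = p.1 • ((1:ℝ), (0:ℝ)) + p.2 • ((0:ℝ), (1:ℝ)) := by
      simp [Prod.ext_iff]
    conv_lhs => rw [hp]
    rw [map_add, map_smul, map_smul, Complex.real_smul, Complex.real_smul]
  constructor
  · intro hns
    by_contra hd
    apply hns
    intro w
    set D := u.re * v.im - u.im * v.re with hD
    refine ⟨((w.re * v.im - w.im * v.re) / D, (u.re * w.im - u.im * w.re) / D), ?_⟩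
    rw [hL]
    apply Complex.ext <;>
      simp only [Complex.add_re, Complex.add_im, Complex.mul_re,
        Complex.mul_im, Complex.ofReal_re, Complex.ofReal_im] <;>
      field_simp <;> ring
  · intro hd hs
    by_cases hu0 : u = 0
    · by_cases hv0 : v = 0
      · obtain ⟨p, hp⟩ := hs 1
        rw [hL, hu0, hv0] at hp
        simp at hp
      · obtain ⟨p, hp⟩ := hs ((v.im : ℂ) - v.re * Complex.I)
        have h2 := congrArg (fun z : ℂ => v.im * z.re - v.re * z.im) hp
        simp only [hL, Complex.add_re, Complex.add_im, Complex.mul_re,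
          Complex.mul_im, Complex.ofReal_re, Complex.ofReal_im, Complex.sub_re,
          Complex.sub_im, Complex.I_re, Complex.I_im, hu0, Complex.zero_re,
          Complex.zero_im] at h2
        have hsum : v.re ^ 2 + v.im ^ 2 = 0 := by linear_combination (-1 : ℝ) * h2
        refine hv0 (Complex.ext ?_ ?_) <;> simp only [Complex.zero_re, Complex.zero_im] <;> nlinarith [sq_nonneg v.re, sq_nonneg v.im]
    · obtain ⟨p, hp⟩ := hs ((u.im : ℂ) - u.re * Complex.I)
      have h2 := congrArg (fun z : ℂ => u.im * z.re - u.re * z.im) hp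
      simp only [hL, Complex.add_re, Complex.add_im, Complex.mul_re,
        Complex.mul_im, Complex.ofReal_re, Complex.ofReal_im, Complex.sub_re,
        Complex.sub_im, Complex.I_re, Complex.I_im] at h2
      have hsum : u.re ^ 2 + u.im ^ 2 = 0 := by linear_combination (-1 : ℝ) * h2 - p.2 * hd
      refine hu0 (Complex.ext ?_ ?_) <;> simp only [Complex.zero_re, Complex.zero_im] <;> nlinarith [sq_nonneg u.re, sq_nonneg u.im]

open Complex in
private lemma det_aux15 (a b c k φ η : ℝ) :
    ((k:ℂ) * ((b:ℂ) * (Complex.exp (I * (φ:ℂ)) * I)) * Complex.exp (I * ((φ:ℂ) - (η:ℂ))) +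
        (k:ℂ) * ((a:ℂ) + (b:ℂ) * Complex.exp (I * (φ:ℂ)) + (c:ℂ) * Complex.exp (I * (η:ℂ))) *
          (Complex.exp (I * ((φ:ℂ) - (η:ℂ))) * I)).re *
      ((k:ℂ) * ((c:ℂ) * (Complex.exp (I * (η:ℂ)) * I)) * Complex.exp (I * ((φ:ℂ) - (η:ℂ))) +
        (k:ℂ) * ((a:ℂ) + (b:ℂ) * Complex.exp (I * (φ:ℂ)) + (c:ℂ) * Complex.exp (I * (η:ℂ))) *
          (-(Complex.exp (I * ((φ:ℂ) - (η:ℂ))) * I))).im -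
    ((k:ℂ) * ((b:ℂ) * (Complex.exp (I * (φ:ℂ)) * I)) * Complex.exp (I * ((φ:ℂ) - (η:ℂ))) +
        (k:ℂ) * ((a:ℂ) + (b:ℂ) * Complex.exp (I * (φ:ℂ)) + (c:ℂ) * Complex.exp (I * (η:ℂ))) *
          (Complex.exp (I * ((φ:ℂ) - (η:ℂ))) * I)).im *
      ((k:ℂ) * ((c:ℂ) * (Complex.exp (I * (η:ℂ)) * I)) * Complex.exp (I * ((φ:ℂ) - (η:ℂ))) +
        (k:ℂ) * ((a:ℂ) + (b:ℂ) * Complex.exp (I * (φ:ℂ)) + (c:ℂ) * Complex.exp (I * (η:ℂ))) *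
          (-(Complex.exp (I * ((φ:ℂ) - (η:ℂ))) * I))).re
    = k ^ 2 * (a * b * Real.sin φ + a * c * Real.sin η + b * c * Real.sin (η - φ)) := by
  have eφ : Complex.exp (I * (φ:ℂ)) = ((Real.cos φ : ℝ) : ℂ) + ((Real.sin φ : ℝ) : ℂ) * I := by
    rw [mul_comm, Complex.exp_mul_I, ← Complex.ofReal_cos, ← Complex.ofReal_sin]
  have eη : Complex.exp (I * (η:ℂ)) = ((Real.cos η : ℝ) : ℂ) + ((Real.sin η : ℝ) : ℂ) * I := by
    rw [mul_comm, Complex.exp_mul_I, ← Complex.ofReal_cos, ← Complex.ofReal_sin]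
  have eE : Complex.exp (I * ((φ:ℂ) - (η:ℂ)))
      = ((Real.cos (φ - η) : ℝ) : ℂ) + ((Real.sin (φ - η) : ℝ) : ℂ) * I := by
    have h : ((φ:ℂ) - (η:ℂ)) = ((φ - η : ℝ) : ℂ) := by push_cast; ring
    rw [h, mul_comm, Complex.exp_mul_I, ← Complex.ofReal_cos, ← Complex.ofReal_sin]
  rw [eφ, eη, eE, Real.sin_sub η φ]
  simp only [Complex.add_re, Complex.add_im, Complex.mul_re, Complex.mul_im,
    Complex.ofReal_re, Complex.ofReal_im, Complex.I_re, Complex.I_im, Complex.neg_re,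
    Complex.neg_im]
  have h3 : Real.sin (φ - η) ^ 2 + Real.cos (φ - η) ^ 2 = 1 := Real.sin_sq_add_cos_sq (φ - η)
  linear_combination (k ^ 2 * (b * c * (Real.cos φ * Real.sin η - Real.sin φ * Real.cos η)
    + a * c * Real.sin η + a * b * Real.sin φ)) * h3

open Complex in
theorem stmt_15 (a b c : ℝ) (ha : 0 < a) (hb : 0 < b) (hc : 0 < c) (φ η : ℝ)
    (F : ℝ × ℝ → ℂ)
    (hF : F = fun p : ℝ × ℝ =>
      -((b : ℂ) / ((a : ℂ) * (c : ℂ))) *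
        ((a : ℂ) + (b : ℂ) * Complex.exp (I * (p.1 : ℂ)) +
          (c : ℂ) * Complex.exp (I * (p.2 : ℂ))) *
        Complex.exp (I * ((p.1 : ℂ) - (p.2 : ℂ)))) :
    ((deriv (fun s => F (s, η)) φ).re * (deriv (fun t => F (φ, t)) η).im
        - (deriv (fun s => F (s, η)) φ).im * (deriv (fun t => F (φ, t)) η).re
      = b ^ 2 / (a ^ 2 * c ^ 2) *
          (a * b * Real.sin φ + a * c * Real.sin η + b * c * Real.sin (η - φ))) ∧
    (¬ Function.Surjective (fderiv ℝ F (φ, η)) ↔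
      (1 / 2) * (a * b * Real.sin φ + a * c * Real.sin η
        + b * c * Real.sin (η - φ)) = 0) := by
  subst hF
  set K : ℂ := -((b : ℂ) / ((a : ℂ) * (c : ℂ))) with hK
  -- basic exp derivatives
  have e1 : HasDerivAt (fun s : ℝ => Complex.exp (I * (s:ℂ))) (Complex.exp (I * (φ:ℂ)) * I) φ := by
    have h := ((Complex.hasDerivAt_exp (I * (φ:ℂ))).comp (φ:ℂ)
      ((hasDerivAt_id ((φ:ℂ))).const_mul I)).comp_ofReal
    simpa using h
  have e1' : HasDerivAt (fun t : ℝ => Complex.exp (I * (t:ℂ))) (Complex.exp (I * (η:ℂ)) * I) η := by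
    have h := ((Complex.hasDerivAt_exp (I * (η:ℂ))).comp (η:ℂ)
      ((hasDerivAt_id ((η:ℂ))).const_mul I)).comp_ofReal
    simpa using h
  have e3 : HasDerivAt (fun s : ℝ => Complex.exp (I * ((s:ℂ) - (η:ℂ))))
      (Complex.exp (I * ((φ:ℂ) - (η:ℂ))) * I) φ := by
    have hin : HasDerivAt (fun z : ℂ => I * (z - (η:ℂ))) (I * 1) (φ:ℂ) :=
      ((hasDerivAt_id ((φ:ℂ))).sub_const (η:ℂ)).const_mul I
    have h := ((Complex.hasDerivAt_exp (I * ((φ:ℂ) - η))).comp (φ:ℂ) hin).comp_ofReal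
    simpa using h
  have e4 : HasDerivAt (fun t : ℝ => Complex.exp (I * ((φ:ℂ) - (t:ℂ))))
      (-(Complex.exp (I * ((φ:ℂ) - (η:ℂ))) * I)) η := by
    have hin : HasDerivAt (fun z : ℂ => I * ((φ:ℂ) - z)) (I * (-1)) (η:ℂ) :=
      ((hasDerivAt_id ((η:ℂ))).const_sub (φ:ℂ)).const_mul I
    have h := ((Complex.hasDerivAt_exp (I * ((φ:ℂ) - η))).comp (η:ℂ) hin).comp_ofReal
    simpa using h
  set U : ℂ := K * ((b:ℂ) * (Complex.exp (I * (φ:ℂ)) * I)) * Complex.exp (I * ((φ:ℂ) - (η:ℂ))) +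
      K * ((a:ℂ) + (b:ℂ) * Complex.exp (I * (φ:ℂ)) + (c:ℂ) * Complex.exp (I * (η:ℂ))) *
        (Complex.exp (I * ((φ:ℂ) - (η:ℂ))) * I) with hUdef
  set V : ℂ := K * ((c:ℂ) * (Complex.exp (I * (η:ℂ)) * I)) * Complex.exp (I * ((φ:ℂ) - (η:ℂ))) +
      K * ((a:ℂ) + (b:ℂ) * Complex.exp (I * (φ:ℂ)) + (c:ℂ) * Complex.exp (I * (η:ℂ))) *
        (-(Complex.exp (I * ((φ:ℂ) - (η:ℂ))) * I)) with hVdef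
  have hU : HasDerivAt (fun s : ℝ =>
      K * ((a:ℂ) + (b:ℂ) * Complex.exp (I * (s:ℂ)) + (c:ℂ) * Complex.exp (I * (η:ℂ))) *
        Complex.exp (I * ((s:ℂ) - (η:ℂ)))) U φ :=
    ((((e1.const_mul (b:ℂ)).const_add (a:ℂ)).add_const
      ((c:ℂ) * Complex.exp (I * (η:ℂ)))).const_mul K).mul e3
  have hV : HasDerivAt (fun t : ℝ =>
      K * ((a:ℂ) + (b:ℂ) * Complex.exp (I * (φ:ℂ)) + (c:ℂ) * Complex.exp (I * (t:ℂ))) *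
        Complex.exp (I * ((φ:ℂ) - (t:ℂ)))) V η :=
    (((e1'.const_mul (c:ℂ)).const_add ((a:ℂ) + (b:ℂ) * Complex.exp (I * (φ:ℂ)))).const_mul K).mul e4
  have hderU : deriv (fun s : ℝ =>
      K * ((a:ℂ) + (b:ℂ) * Complex.exp (I * (s:ℂ)) + (c:ℂ) * Complex.exp (I * (η:ℂ))) *
        Complex.exp (I * ((s:ℂ) - (η:ℂ)))) φ = U := hU.deriv
  have hderV : deriv (fun t : ℝ =>
      K * ((a:ℂ) + (b:ℂ) * Complex.exp (I * (φ:ℂ)) + (c:ℂ) * Complex.exp (I * (t:ℂ))) *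
        Complex.exp (I * ((φ:ℂ) - (t:ℂ)))) η = V := hV.deriv
  -- the determinant value
  have hKR : K = ((-(b / (a * c)) : ℝ) : ℂ) := by rw [hK]; push_cast; ring
  have hdet : U.re * V.im - U.im * V.re
      = b ^ 2 / (a ^ 2 * c ^ 2) *
          (a * b * Real.sin φ + a * c * Real.sin η + b * c * Real.sin (η - φ)) := by
    rw [hUdef, hVdef, hKR]
    rw [det_aux15 a b c (-(b / (a * c))) φ η]
    have hk2 : (-(b / (a * c))) ^ 2 = b ^ 2 / (a ^ 2 * c ^ 2) := by
      rw [neg_pow, div_pow]; ring_nf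
    rw [hk2]
  -- differentiability and fderiv values
  have hdiff : Differentiable ℝ (fun p : ℝ × ℝ =>
      K * ((a:ℂ) + (b:ℂ) * Complex.exp (I * (p.1:ℂ)) + (c:ℂ) * Complex.exp (I * (p.2:ℂ))) *
        Complex.exp (I * ((p.1:ℂ) - (p.2:ℂ)))) := by
    have h1 : Differentiable ℝ (fun p : ℝ × ℝ => (p.1 : ℂ)) :=
      Complex.ofRealCLM.differentiable.comp differentiable_fst
    have h2 : Differentiable ℝ (fun p : ℝ × ℝ => (p.2 : ℂ)) :=
      Complex.ofRealCLM.differentiable.comp differentiable_snd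
    fun_prop
  set L := fderiv ℝ (fun p : ℝ × ℝ =>
      K * ((a:ℂ) + (b:ℂ) * Complex.exp (I * (p.1:ℂ)) + (c:ℂ) * Complex.exp (I * (p.2:ℂ))) *
        Complex.exp (I * ((p.1:ℂ) - (p.2:ℂ)))) (φ, η) with hLdef
  have hL1 : L (1, 0) = U := by
    have h := (hdiff (φ, η)).hasFDerivAt.comp_hasDerivAt φ
      (HasDerivAt.prodMk (hasDerivAt_id φ) (hasDerivAt_const φ η))
    exact (h.unique hU)
  have hL2 : L (0, 1) = V := by
    have h := (hdiff (φ, η)).hasFDerivAt.comp_hasDerivAt η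
      (HasDerivAt.prodMk (hasDerivAt_const η φ) (hasDerivAt_id η))
    exact (h.unique hV)
  constructor
  · rw [hderU, hderV]; exact hdet
  · rw [surj_aux15 L, hL1, hL2, hdet]
    have hk : (0:ℝ) < b ^ 2 / (a ^ 2 * c ^ 2) := by positivity
    rw [mul_eq_zero, mul_eq_zero]
    simp [hk.ne']
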